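/- Let K be a finite field of odd characteristic, Δ ∈ K a non-square, and α ∈ K. Then there exists β ∈ K with α² − Δβ² = 4 if and only if α² − 4 = 0 or α² − 4 is not a square in K; that is, α is the abscissa of a K-point of the Pell conic x² − Δy² = 4 exactly when α² − 4 is not a nonzero square. -/

import Mathlib

theorem pell_conic_abscissa_iff_odd_char
    (K : Type*) [Field K] [Fintype K] (hchar : ringChar K ≠ 2)
    (Δ : K) (hΔ : ¬ IsSquare Δ) (α : K) :
    (∃ β : K, α ^ 2 - Δ * β ^ 2 = 4) ↔ (α ^ 2 - 4 = 0 ∨ ¬ IsSquare (α ^ 2 - 4)) := by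
  classical
  have hΔ0 : Δ ≠ 0 := fun h => hΔ (h ▸ IsSquare.zero)
  have hχΔ : quadraticChar K Δ = -1 :=
    (quadraticChar_neg_one_iff_not_isSquare).mpr hΔ
  constructor
  · rintro ⟨β, hβ⟩
    have h : α ^ 2 - 4 = Δ * β ^ 2 := by linear_combination hβ
    by_cases hb : β = 0
    · left; simp [h, hb]
    · right
      intro hs
      have : quadraticChar K (α ^ 2 - 4) = -1 := by
        rw [h, map_mul, hχΔ, quadraticChar_sq_one' hb, mul_one]
      rw [(quadraticChar_one_iff_isSquare ?_).mpr hs] at this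
      · norm_num at this
      · rw [h]; exact mul_ne_zero hΔ0 (pow_ne_zero 2 hb)
  · rintro (h | h)
    · exact ⟨0, by linear_combination h⟩
    · have hne : α ^ 2 - 4 ≠ 0 := fun h0 => h (h0 ▸ IsSquare.zero)
      have : quadraticChar K ((α ^ 2 - 4) * Δ) = 1 := by
        rw [map_mul, (quadraticChar_neg_one_iff_not_isSquare).mpr h, hχΔ]
        norm_num
      obtain ⟨c, hc⟩ := (quadraticChar_one_iff_isSquare (mul_ne_zero hne hΔ0)).mp this
      refine ⟨c / Δ, ?_⟩
      field_simp
      linear_combination hc
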